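/- arXiv:1404.0077 — 4 statements merged into one kernel-verified Lean document; each statement's English description precedes it below -/
import Mathlib

section
/- If a metric space X without isolated points has a countable nice cover, then X is separable. -/
open EMetric Set
open scoped ENNReal

/-- A `c`-nice cover of a metric space `X`: a sequence of families `B n` of subsets of `X`
satisfying decreasing monotonicity (finitely many children), increasing monotonicity
(unique ancestors), and the `c`-cover property. -/
structure NiceCover (X : Type*) [MetricSpace X] (c : ℕ) where
  B : ℕ → Set (Set X)
  finite_children : ∀ n : ℕ, ∀ U ∈ B n, {V | V ∈ B (n + 1) ∧ V ⊆ U}.Finite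
  unique_ancestor : ∀ n : ℕ, ∀ U ∈ B n, ∀ m < n, ∃! V, V ∈ B m ∧ U ⊆ V
  ccover : ∀ r : ℕ, ∃ ε : ℝ≥0∞, 0 < ε ∧ ∀ A : Set X,
    0 < EMetric.diam A → EMetric.diam A < ε →
    ∃ 𝒰 : Finset (Set X), 𝒰.card ≤ c ∧
      (∀ U ∈ 𝒰, ∃ n > r, U ∈ B n) ∧
      A ⊆ ⋃ U ∈ 𝒰, U ∧
      ∀ U ∈ 𝒰, EMetric.diam U < c * EMetric.diam A

/-- If a metric space `X` without isolated points has a countable nice cover,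
then `X` is separable. -/
theorem separable_of_countable_niceCover {X : Type*} [MetricSpace X]
    (hnoiso : ∀ x : X, ∀ ε : ℝ, 0 < ε → ∃ y : X, y ≠ x ∧ dist y x < ε)
    (c : ℕ) (N : NiceCover X c)
    (hcount : Set.Countable {U : Set X | ∃ n, U ∈ N.B n}) :
    TopologicalSpace.SeparableSpace X := by
  rcases isEmpty_or_nonempty X with hX | hX
  · exact inferInstance
  have : Inhabited X := Classical.inhabited_of_nonempty hX
  set F : Set (Set X) := {U : Set X | ∃ n, U ∈ N.B n} with hF
  classical
  set f : Set X → X := fun U => if h : U.Nonempty then h.some else default with hf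
  refine ⟨⟨f '' F, hcount.image f, ?_⟩⟩
  rw [Metric.dense_iff]
  intro x ε hε
  -- get ε' from ccover at r = 0
  obtain ⟨ε', hε'pos, hcc⟩ := N.ccover 0
  -- choose a small real δ
  set δ₀ : ℝ := (min ε' 1).toReal / 2 with hδ₀
  have hminpos : 0 < min ε' 1 := lt_min hε'pos zero_lt_one
  have hminne : min ε' 1 ≠ ⊤ := ne_top_of_le_ne_top ENNReal.one_ne_top (min_le_right _ _)
  have hδ₀pos : 0 < δ₀ := by
    have : 0 < (min ε' 1).toReal := ENNReal.toReal_pos hminpos.ne' hminne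
    positivity
  have hδ₀lt : ENNReal.ofReal δ₀ < ε' := by
    calc ENNReal.ofReal δ₀ < ENNReal.ofReal ((min ε' 1).toReal) := by
          apply ENNReal.ofReal_lt_ofReal_iff'.2
          constructor <;> [linarith [ENNReal.toReal_pos hminpos.ne' hminne]; exact ENNReal.toReal_pos hminpos.ne' hminne]
      _ = min ε' 1 := ENNReal.ofReal_toReal hminne
      _ ≤ ε' := min_le_left _ _
  set δ : ℝ := min δ₀ (ε / (c + 1)) with hδ
  have hδpos : 0 < δ := lt_min hδ₀pos (by positivity)
  obtain ⟨y, hyx, hyd⟩ := hnoiso x δ hδpos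
  set A : Set X := {x, y} with hA
  have hdiamA : EMetric.diam A = edist x y := EMetric.diam_pair
  have hxy : edist x y ≠ 0 := by simpa using hyx.symm
  have hdlt : edist x y < ENNReal.ofReal δ := by
    rw [edist_dist, dist_comm]
    exact ENNReal.ofReal_lt_ofReal_iff hδpos |>.2 hyd
  have hApos : 0 < EMetric.diam A := by rw [hdiamA]; exact pos_iff_ne_zero.2 hxy
  have hAlt : EMetric.diam A < ε' := by
    rw [hdiamA]
    exact hdlt.trans_le ((ENNReal.ofReal_le_ofReal (min_le_left _ _)).trans hδ₀lt.le)
  obtain ⟨𝒰, _, h𝒰B, h𝒰cov, h𝒰diam⟩ := hcc A hApos hAlt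
  have hxA : x ∈ A := Or.inl rfl
  obtain ⟨U, hU𝒰, hxU⟩ := by simpa using h𝒰cov hxA
  have hUF : U ∈ F := by
    obtain ⟨n, _, hn⟩ := h𝒰B U hU𝒰
    exact ⟨n, hn⟩
  have hUne : U.Nonempty := ⟨x, hxU⟩
  have hfU : f U ∈ U := by
    rw [hf]
    simp only [hUne, dif_pos]
    exact hUne.some_mem
  refine ⟨f U, ?_, Set.mem_image_of_mem f hUF⟩
  rw [Metric.mem_ball]
  have h1 : edist (f U) x ≤ EMetric.diam U := EMetric.edist_le_diam_of_mem hfU hxU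
  have h2 : EMetric.diam U < c * EMetric.diam A := h𝒰diam U hU𝒰
  have h3 : (c : ℝ≥0∞) * EMetric.diam A ≤ ENNReal.ofReal ((c : ℝ) * δ) := by
    rw [hdiamA, ENNReal.ofReal_mul (by positivity), ENNReal.ofReal_natCast]
    exact mul_le_mul_right hdlt.le _
  have h4 : (c : ℝ) * δ ≤ ε := by
    have hδle : δ ≤ ε / (c + 1) := min_le_right _ _
    have hc1 : (0:ℝ) < (c:ℝ) + 1 := by positivity
    have : (c : ℝ) * δ ≤ (c : ℝ) * (ε / (c + 1)) :=
      mul_le_mul_of_nonneg_left hδle (by positivity)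
    calc (c : ℝ) * δ ≤ (c : ℝ) * (ε / (c + 1)) := this
      _ ≤ ε := by
          rw [mul_div_assoc', div_le_iff₀ hc1]
          nlinarith
  have : edist (f U) x < ENNReal.ofReal ε :=
    (h1.trans_lt h2).trans_le (h3.trans (ENNReal.ofReal_le_ofReal h4))
  exact (edist_lt_ofReal).1 this
end

section
/- Let d be an s-supergale and ℰ ⊆ B a set of pairwise incomparable (with respect to ⊆) elements with d(U)·diam(U) > 0 for all U∈ℰ. Then Σ_{W∈B_0} d(W)·diam(W)^s ≥ Σ_{V∈ℰ} d(V)·diam(V)^s. -/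
open Set Filter
open scoped ENNReal NNReal Topology

/-- Membership in the union `B = ∪_n B_n` of a nice cover. -/
def NiceCover.MemB {X : Type*} [MetricSpace X] {c : ℕ} (N : NiceCover X c)
    (U : Set X) : Prop := ∃ n, U ∈ N.B n

/-- An `s`-supergale on a nice cover: a function `d : B → [0,∞)` such that
`Σ_{U ∈ B_0} d(U)·diam(U)^s < ∞` and for every `n` and `U ∈ B_n`,
`d(U)·diam(U)^s ≥ Σ_{V ∈ B_{n+1}, V ⊆ U} d(V)·diam(V)^s`. -/
def IsSupergale {X : Type*} [MetricSpace X] {c : ℕ} (N : NiceCover X c)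
    (s : ℝ) (d : Set X → ℝ≥0) : Prop :=
  (∑' U : N.B 0, (d U : ℝ≥0∞) * EMetric.diam (U : Set X) ^ s) < ∞ ∧
  ∀ n : ℕ, ∀ U ∈ N.B n,
    (∑' V : {V // V ∈ N.B (n + 1) ∧ V ⊆ U},
        (d V : ℝ≥0∞) * EMetric.diam (V : Set X) ^ s)
      ≤ (d U : ℝ≥0∞) * EMetric.diam U ^ s

/-- `d` succeeds on `x` if some `B`-representation `(w_n)` of `x` satisfies
`limsup_n d(w_n) = ∞`. -/
def Succeeds {X : Type*} [MetricSpace X] {c : ℕ} (N : NiceCover X c)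
    (d : Set X → ℝ≥0) (x : X) : Prop :=
  ∃ w : ℕ → Set X, (∀ n, w n ∈ N.B n) ∧ (∀ n, x ∈ w n) ∧
    Filter.atTop.limsup (fun n => (d (w n) : ℝ≥0∞)) = ∞

/-- The success set `S^∞[d]` of `d`. -/
def SuccessSet {X : Type*} [MetricSpace X] {c : ℕ} (N : NiceCover X c)
    (d : Set X → ℝ≥0) : Set X := {x | Succeeds N d x}

open Classical in
/-- The ancestor of `V` at level `k`: `V` itself if `V ∈ B k`, otherwise a chosen
member of `B k` containing `V` (unique when `V ∈ B n` for some `n > k`). -/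
noncomputable def NiceCover.anc {X : Type*} [MetricSpace X] {c : ℕ} (N : NiceCover X c)
    (k : ℕ) (V : Set X) : Set X :=
  if V ∈ N.B k then V
  else if h : ∃ W, W ∈ N.B k ∧ V ⊆ W then h.choose else V

open Classical in
lemma NiceCover.anc_eq_of_mem {X : Type*} [MetricSpace X] {c : ℕ} (N : NiceCover X c)
    {k : ℕ} {V : Set X} (h : V ∈ N.B k) : N.anc k V = V := by
  simp [NiceCover.anc, h]

open Classical in
lemma NiceCover.anc_spec {X : Type*} [MetricSpace X] {c : ℕ} (N : NiceCover X c)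
    {k n : ℕ} {V : Set X} (hV : V ∈ N.B n) (hk : k ≤ n) :
    N.anc k V ∈ N.B k ∧ V ⊆ N.anc k V := by
  by_cases h : V ∈ N.B k
  · rw [N.anc_eq_of_mem h]; exact ⟨h, subset_rfl⟩
  · have hkn : k < n := lt_of_le_of_ne hk (by rintro rfl; exact h hV)
    have hex : ∃ W, W ∈ N.B k ∧ V ⊆ W := (N.unique_ancestor n V hV k hkn).exists
    rw [NiceCover.anc, if_neg h, dif_pos hex]
    exact hex.choose_spec

lemma NiceCover.anc_unique {X : Type*} [MetricSpace X] {c : ℕ} (N : NiceCover X c)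
    {k n : ℕ} {V U : Set X} (hV : V ∈ N.B n) (hk : k < n)
    (hU : U ∈ N.B k) (hVU : V ⊆ U) : N.anc k V = U := by
  obtain ⟨hm, hsub⟩ := N.anc_spec hV hk.le
  exact (N.unique_ancestor n V hV k hk).unique ⟨hm, hsub⟩ ⟨hU, hVU⟩

/-- Key finite lemma: if every element of a finite family `F ⊆ ℰ` has a level between
`k` and `k + m` and ancestor `U` at level `k`, then the weighted sum over `F` is at most
the weight of `U`. -/
lemma NiceCover.key {X : Type*} [MetricSpace X] {c : ℕ} (N : NiceCover X c)
    (s : ℝ) (d : Set X → ℝ≥0) (hd : IsSupergale N s d)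
    (ℰ : Set (Set X))
    (hinc : ∀ U ∈ ℰ, ∀ V ∈ ℰ, U ≠ V → ¬U ⊆ V ∧ ¬V ⊆ U) :
    ∀ m k U, U ∈ N.B k → ∀ F : Finset (Set X), ↑F ⊆ ℰ →
      (∀ V ∈ F, ∃ n, k ≤ n ∧ n ≤ k + m ∧ V ∈ N.B n ∧ N.anc k V = U) →
      ∑ V ∈ F, (d V : ℝ≥0∞) * EMetric.diam V ^ s
        ≤ (d U : ℝ≥0∞) * EMetric.diam U ^ s := by
  classical
  intro m
  induction m with
  | zero =>
    intro k U hU F hFE hF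
    have hsub : F ⊆ {U} := by
      intro V hV
      obtain ⟨n, hkn, hnk, hVB, hanc⟩ := hF V hV
      have hnk' : n = k := le_antisymm (by omega) hkn
      subst hnk'
      rw [N.anc_eq_of_mem hVB] at hanc
      simp [hanc]
    calc ∑ V ∈ F, (d V : ℝ≥0∞) * EMetric.diam V ^ s
        ≤ ∑ V ∈ ({U} : Finset (Set X)), (d V : ℝ≥0∞) * EMetric.diam V ^ s :=
          Finset.sum_le_sum_of_subset hsub
      _ = (d U : ℝ≥0∞) * EMetric.diam U ^ s := by simp
  | succ m ih =>
    intro k U hU F hFE hF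
    by_cases hUF : U ∈ F
    · have hsub : F ⊆ {U} := by
        intro V hV
        by_contra hne
        simp only [Finset.mem_singleton] at hne
        obtain ⟨n, hkn, hnk, hVB, hanc⟩ := hF V hV
        have hVU : V ⊆ U := hanc ▸ (N.anc_spec hVB hkn).2
        exact (hinc V (hFE hV) U (hFE hUF) hne).1 hVU
      calc ∑ V ∈ F, (d V : ℝ≥0∞) * EMetric.diam V ^ s
          ≤ ∑ V ∈ ({U} : Finset (Set X)), (d V : ℝ≥0∞) * EMetric.diam V ^ s :=
            Finset.sum_le_sum_of_subset hsub
        _ = (d U : ℝ≥0∞) * EMetric.diam U ^ s := by simp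
    · set C : Finset (Set X) := (N.finite_children k U hU).toFinset with hC
      have hstep : ∀ V ∈ F, N.anc (k+1) V ∈ C ∧
          ∃ n, k + 1 ≤ n ∧ n ≤ (k+1) + m ∧ V ∈ N.B n := by
        intro V hV
        obtain ⟨n, hkn, hnm, hVB, hanc⟩ := hF V hV
        have hVnk : V ∉ N.B k := by
          intro h
          rw [N.anc_eq_of_mem h] at hanc
          exact hUF (hanc ▸ hV)
        have hkn' : k + 1 ≤ n := by
          rcases lt_or_eq_of_le hkn with h | h
          · omega
          · exact absurd (h ▸ hVB) hVnk
        have hVU : V ⊆ U := hanc ▸ (N.anc_spec hVB hkn).2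
        obtain ⟨hWB, hVW⟩ := N.anc_spec hVB hkn'
        set W := N.anc (k+1) V with hWdef
        obtain ⟨U₂, hU₂, hWU₂⟩ := (N.unique_ancestor (k+1) W hWB k k.lt_succ_self).exists
        have hU₂U : U₂ = U :=
          (N.unique_ancestor n V hVB k (by omega)).unique
            ⟨hU₂, hVW.trans hWU₂⟩ ⟨hU, hVU⟩
        have hWU : W ⊆ U := hU₂U ▸ hWU₂
        refine ⟨?_, n, hkn', by omega, hVB⟩
        rw [hC, Set.Finite.mem_toFinset]
        exact ⟨hWB, hWU⟩
      have hmap : ∀ V ∈ F, N.anc (k+1) V ∈ C := fun V hV => (hstep V hV).1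
      rw [← Finset.sum_fiberwise_of_maps_to hmap
        (fun V => (d V : ℝ≥0∞) * EMetric.diam V ^ s)]
      have hCB : ∀ W ∈ C, W ∈ N.B (k+1) ∧ W ⊆ U := by
        intro W hW
        rwa [hC, Set.Finite.mem_toFinset] at hW
      calc ∑ W ∈ C, ∑ V ∈ F.filter (fun V => N.anc (k+1) V = W),
              (d V : ℝ≥0∞) * EMetric.diam V ^ s
          ≤ ∑ W ∈ C, (d W : ℝ≥0∞) * EMetric.diam W ^ s := by
            refine Finset.sum_le_sum fun W hW => ?_
            refine ih (k+1) W (hCB W hW).1 _ ?_ ?_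
            · exact fun V hV => hFE (Finset.mem_filter.mp hV).1
            · intro V hV
              obtain ⟨hVF, hancV⟩ := Finset.mem_filter.mp hV
              obtain ⟨_, n, h1, h2, h3⟩ := hstep V hVF
              exact ⟨n, h1, h2, h3, hancV⟩
        _ ≤ ∑' V : {V // V ∈ N.B (k+1) ∧ V ⊆ U},
              (d V : ℝ≥0∞) * EMetric.diam (V : Set X) ^ s := by
            have heq : (∑' V : {V // V ∈ N.B (k+1) ∧ V ⊆ U},
                (d V : ℝ≥0∞) * EMetric.diam (V : Set X) ^ s)
                = ∑' V : Set X, Set.indicator {V | V ∈ N.B (k+1) ∧ V ⊆ U}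
                    (fun V => (d V : ℝ≥0∞) * EMetric.diam V ^ s) V :=
              tsum_subtype {V | V ∈ N.B (k+1) ∧ V ⊆ U}
                (fun V => (d V : ℝ≥0∞) * EMetric.diam V ^ s)
            rw [heq]
            calc ∑ W ∈ C, (d W : ℝ≥0∞) * EMetric.diam W ^ s
                = ∑ W ∈ C, Set.indicator {V | V ∈ N.B (k+1) ∧ V ⊆ U}
                    (fun V => (d V : ℝ≥0∞) * EMetric.diam V ^ s) W := by
                  refine Finset.sum_congr rfl fun W hW => ?_
                  exact (Set.indicator_of_mem
                    (show W ∈ {V | V ∈ N.B (k+1) ∧ V ⊆ U} from hCB W hW)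
                    (fun V => (d V : ℝ≥0∞) * EMetric.diam V ^ s)).symm
              _ ≤ _ := ENNReal.sum_le_tsum C
        _ ≤ (d U : ℝ≥0∞) * EMetric.diam U ^ s := hd.2 k U hU

/-- For an `s`-supergale `d` and a family `ℰ ⊆ B` of pairwise incomparable sets
with `d(U)·diam(U) > 0` for all `U ∈ ℰ`:
`Σ_{W ∈ B_0} d(W)·diam(W)^s ≥ Σ_{V ∈ ℰ} d(V)·diam(V)^s`. -/
theorem supergale_incomparable_sum {X : Type*} [MetricSpace X] {c : ℕ} (N : NiceCover X c)
    (s : ℝ) (hs : 0 ≤ s) (d : Set X → ℝ≥0) (hd : IsSupergale N s d)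
    (ℰ : Set (Set X)) (hℰB : ∀ U ∈ ℰ, N.MemB U)
    (hinc : ∀ U ∈ ℰ, ∀ V ∈ ℰ, U ≠ V → ¬U ⊆ V ∧ ¬V ⊆ U)
    (hpos : ∀ U ∈ ℰ, 0 < (d U : ℝ≥0∞) * EMetric.diam U) :
    (∑' V : ℰ, (d V : ℝ≥0∞) * EMetric.diam (V : Set X) ^ s)
      ≤ ∑' W : N.B 0, (d W : ℝ≥0∞) * EMetric.diam (W : Set X) ^ s := by
  classical
  set f : Set X → ℝ≥0∞ := fun V => (d V : ℝ≥0∞) * EMetric.diam V ^ s with hf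
  rw [ENNReal.tsum_eq_iSup_sum]
  refine iSup_le fun F => ?_
  set F' : Finset (Set X) := F.image Subtype.val with hF'
  have hsum : ∑ v ∈ F, f ↑v = ∑ V ∈ F', f V := by
    rw [hF', Finset.sum_image]
    intro x _ y _ h
    exact Subtype.ext h
  have hF'E : ∀ V ∈ F', V ∈ ℰ := by
    intro V hV
    obtain ⟨v, _, rfl⟩ := Finset.mem_image.mp hV
    exact v.2
  -- level function
  set lvl : Set X → ℕ := fun V => if h : N.MemB V then h.choose else 0 with hlvl
  have hlvl_spec : ∀ V ∈ F', V ∈ N.B (lvl V) := by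
    intro V hV
    have h : N.MemB V := hℰB V (hF'E V hV)
    simp only [hlvl, dif_pos h]
    exact h.choose_spec
  set m : ℕ := F'.sup lvl with hm
  set C₀ : Finset (Set X) := F'.image (N.anc 0) with hC₀
  have hanc0 : ∀ V ∈ F', N.anc 0 V ∈ N.B 0 ∧ V ⊆ N.anc 0 V :=
    fun V hV => N.anc_spec (hlvl_spec V hV) (Nat.zero_le _)
  have hmap : ∀ V ∈ F', N.anc 0 V ∈ C₀ := fun V hV => Finset.mem_image_of_mem _ hV
  rw [hsum, ← Finset.sum_fiberwise_of_maps_to hmap f]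
  have hC₀B : ∀ U ∈ C₀, U ∈ N.B 0 := by
    intro U hU
    obtain ⟨V, hV, rfl⟩ := Finset.mem_image.mp hU
    exact (hanc0 V hV).1
  calc ∑ U ∈ C₀, ∑ V ∈ F'.filter (fun V => N.anc 0 V = U), f V
      ≤ ∑ U ∈ C₀, f U := by
        refine Finset.sum_le_sum fun U hU => ?_
        refine N.key s d hd ℰ hinc m 0 U (hC₀B U hU) _ ?_ ?_
        · exact fun V hV => hF'E V (Finset.mem_filter.mp hV).1
        · intro V hV
          obtain ⟨hVF, hancV⟩ := Finset.mem_filter.mp hV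
          exact ⟨lvl V, Nat.zero_le _, by simpa [hm] using Finset.le_sup hVF,
            hlvl_spec V hVF, hancV⟩
    _ ≤ ∑' W : N.B 0, f W := by
        rw [tsum_subtype (N.B 0) f]
        calc ∑ U ∈ C₀, f U
            = ∑ U ∈ C₀, Set.indicator (N.B 0) f U := by
              refine Finset.sum_congr rfl fun U hU => ?_
              exact (Set.indicator_of_mem (hC₀B U hU) f).symm
          _ ≤ _ := ENNReal.sum_le_tsum C₀
end

section
/- Let d be an s-supergale, M = Σ_{W∈B_0} d(W)·diam(W)^s, and for k∈ℕ let C_k = {U∈B : diam(U)>0, d(U) > 2^k·M} and let D_k be the maximal elements of C_k (elements with no proper superset in C_k). Then Σ_{U∈D_k} diam(U)^s ≤ 2^{-k}. -/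
open Set Filter
open scoped ENNReal NNReal Topology

private lemma sum_le_tsum_subtype' {α : Type*} (S : Set α) (f : α → ℝ≥0∞)
    (F : Finset α) (hF : ∀ x ∈ F, x ∈ S) :
    ∑ x ∈ F, f x ≤ ∑' x : S, f x := by
  rw [tsum_subtype]
  calc ∑ x ∈ F, f x = ∑ x ∈ F, S.indicator f x := by
        refine Finset.sum_congr rfl fun x hx => ?_
        rw [Set.indicator_of_mem (hF x hx)]
    _ ≤ ∑' x, S.indicator f x := ENNReal.sum_le_tsum F

private lemma antichain_sum_le {X : Type*} [MetricSpace X] {c : ℕ} (N : NiceCover X c)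
    {s : ℝ} {d : Set X → ℝ≥0} (hd : IsSupergale N s d) :
    ∀ (n : ℕ) (ℓ : Set X → ℕ) (F : Finset (Set X)),
    (∀ U ∈ F, U ∈ N.B (ℓ U)) → (∀ U ∈ F, ℓ U ≤ n) →
    (∀ U ∈ F, ∀ V ∈ F, ℓ U < ℓ V → ¬ V ⊆ U) →
    ∑ U ∈ F, (d U : ℝ≥0∞) * EMetric.diam U ^ s
      ≤ ∑' W : N.B 0, (d W : ℝ≥0∞) * EMetric.diam (W : Set X) ^ s := by
  intro n
  induction n with
  | zero =>
    intro ℓ F hmem hlev _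
    refine sum_le_tsum_subtype' (N.B 0) _ F fun U hU => ?_
    have h := hmem U hU
    rwa [Nat.le_zero.mp (hlev U hU)] at h
  | succ n ih =>
    intro ℓ F hmem hlev hinv
    classical
    set f : Set X → ℝ≥0∞ := fun U => (d U : ℝ≥0∞) * EMetric.diam U ^ s with hf
    set F' : Finset (Set X) := F.filter (fun U => ℓ U = n + 1) with hF'
    set F₀ : Finset (Set X) := F.filter (fun U => ¬ (ℓ U = n + 1)) with hF₀
    have hmemF' : ∀ U ∈ F', U ∈ N.B (n + 1) := by
      intro U hU
      rw [hF', Finset.mem_filter] at hU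
      have := hmem U hU.1
      rwa [hU.2] at this
    set anc : Set X → Set X := fun U =>
      if h : U ∈ N.B (n + 1) then
        (N.unique_ancestor (n + 1) U h n (Nat.lt_succ_self n)).exists.choose
      else ∅ with hancdef
    have hanc : ∀ U, U ∈ N.B (n + 1) → anc U ∈ N.B n ∧ U ⊆ anc U := by
      intro U h
      have : anc U = (N.unique_ancestor (n + 1) U h n (Nat.lt_succ_self n)).exists.choose := by
        rw [hancdef]; simp [h]
      rw [this]
      exact (N.unique_ancestor (n + 1) U h n (Nat.lt_succ_self n)).exists.choose_spec
    set G : Finset (Set X) := F₀ ∪ F'.image anc with hG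
    -- disjointness
    have hdisj : Disjoint F₀ (F'.image anc) := by
      rw [Finset.disjoint_right]
      intro A hA hA0
      obtain ⟨W, hW, rfl⟩ := Finset.mem_image.mp hA
      have hW1 : W ∈ N.B (n + 1) := hmemF' W hW
      have hWF : W ∈ F := (Finset.mem_filter.mp hW).1
      have hAF : anc W ∈ F := (Finset.mem_filter.mp hA0).1
      have hlA : ℓ (anc W) ≤ n := by
        have h1 := hlev _ hAF
        have h2 := (Finset.mem_filter.mp hA0).2
        omega
      have hlW : ℓ W = n + 1 := (Finset.mem_filter.mp hW).2
      exact hinv _ hAF _ hWF (by omega) (hanc W hW1).2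
    set ℓ' : Set X → ℕ := fun U => if U ∈ F₀ then ℓ U else n with hℓ'
    have hmem' : ∀ U ∈ G, U ∈ N.B (ℓ' U) := by
      intro U hU
      rw [hℓ']
      by_cases h : U ∈ F₀
      · simp only [h, if_pos]
        exact hmem U (Finset.mem_filter.mp h).1
      · simp only [h, if_neg, not_false_iff]
        rcases Finset.mem_union.mp hU with h0 | h1
        · exact absurd h0 h
        · obtain ⟨W, hW, rfl⟩ := Finset.mem_image.mp h1
          exact (hanc W (hmemF' W hW)).1
    have hlev' : ∀ U ∈ G, ℓ' U ≤ n := by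
      intro U hU
      rw [hℓ']
      by_cases h : U ∈ F₀
      · simp only [h, if_pos]
        have h1 := hlev U (Finset.mem_filter.mp h).1
        have h2 := (Finset.mem_filter.mp h).2
        omega
      · simp [h]
    have hinv' : ∀ U ∈ G, ∀ V ∈ G, ℓ' U < ℓ' V → ¬ V ⊆ U := by
      intro U hU V hV hlt hVU
      by_cases hV0 : V ∈ F₀
      · -- ℓ' V = ℓ V
        by_cases hU0 : U ∈ F₀
        · have : ℓ U < ℓ V := by simpa [hℓ', hU0, hV0] using hlt
          exact hinv U (Finset.mem_filter.mp hU0).1 V (Finset.mem_filter.mp hV0).1 this hVU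
        · -- U is an ancestor, ℓ' U = n, ℓ' V = ℓ V > n, but V ∈ F₀ means ℓ V ≤ n+1 and ≠ n+1
          have h1 : ℓ V ≤ n := by
            have := hlev V (Finset.mem_filter.mp hV0).1
            have := (Finset.mem_filter.mp hV0).2
            omega
          have : ℓ' V ≤ n := by simpa [hℓ', hV0] using h1
          have h2 : ℓ' U = n := by simp [hℓ', hU0]
          omega
      · -- V is an ancestor: V = anc W, W ⊆ V ⊆ U, ℓ W = n+1 > ℓ U
        have hVim : V ∈ F'.image anc := by
          rcases Finset.mem_union.mp hV with h0 | h1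
          · exact absurd h0 hV0
          · exact h1
        obtain ⟨W, hW, rfl⟩ := Finset.mem_image.mp hVim
        have hW1 : W ∈ N.B (n + 1) := hmemF' W hW
        have hWF : W ∈ F := (Finset.mem_filter.mp hW).1
        have hlW : ℓ W = n + 1 := (Finset.mem_filter.mp hW).2
        have hU0 : U ∈ F₀ := by
          by_contra hU0
          have h1 : ℓ' U = n := by simp [hℓ', hU0]
          have h2 : ℓ' (anc W) ≤ n := hlev' _ hV
          omega
        have hUF : U ∈ F := (Finset.mem_filter.mp hU0).1
        have hlU : ℓ U < n + 1 := by
          have h1 : ℓ' U = ℓ U := by simp [hℓ', hU0]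
          have h2 : ℓ' (anc W) ≤ n := hlev' _ hV
          omega
        exact hinv U hUF W hWF (by omega) ((hanc W hW1).2.trans hVU)
    -- sum over fibers
    have hfiber : ∀ A ∈ F'.image anc,
        ∑ W ∈ F'.filter (fun W => anc W = A), f W ≤ f A := by
      intro A hA
      obtain ⟨W₀, hW₀, rfl⟩ := Finset.mem_image.mp hA
      have hA0 : anc W₀ ∈ N.B n := (hanc W₀ (hmemF' W₀ hW₀)).1
      calc ∑ W ∈ F'.filter (fun W => anc W = anc W₀), f W
          ≤ ∑' V : {V : Set X | V ∈ N.B (n + 1) ∧ V ⊆ anc W₀}, f V := by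
            refine sum_le_tsum_subtype' _ _ _ fun W hW => ?_
            obtain ⟨hW1, hW2⟩ := Finset.mem_filter.mp hW
            exact ⟨hmemF' W hW1, hW2 ▸ (hanc W (hmemF' W hW1)).2⟩
        _ ≤ f (anc W₀) := hd.2 n (anc W₀) hA0
    have hsumF' : ∑ W ∈ F', f W ≤ ∑ A ∈ F'.image anc, f A := by
      rw [← Finset.sum_fiberwise_of_maps_to (fun x hx => Finset.mem_image_of_mem anc hx) f]
      exact Finset.sum_le_sum hfiber
    calc ∑ U ∈ F, f U = ∑ U ∈ F', f U + ∑ U ∈ F₀, f U := by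
          rw [hF', hF₀, Finset.sum_filter_add_sum_filter_not]
      _ ≤ ∑ A ∈ F'.image anc, f A + ∑ U ∈ F₀, f U := by
          exact add_le_add_left hsumF' _
      _ = ∑ U ∈ G, f U := by
          rw [hG, Finset.sum_union hdisj, add_comm]
      _ ≤ _ := ih ℓ' G hmem' hlev' hinv'


/-- Let `d` be an `s`-supergale, `M = Σ_{W ∈ B_0} d(W)·diam(W)^s`,
`C_k = {U ∈ B : diam(U) > 0, d(U) > 2^k·M}` and `D_k` the maximal elements of `C_k`
(those with no proper superset in `C_k`). Then `Σ_{U ∈ D_k} diam(U)^s ≤ 2^{-k}`. -/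
theorem supergale_maximal_cover_sum {X : Type*} [MetricSpace X] {c : ℕ} (N : NiceCover X c)
    (s : ℝ) (hs : 0 ≤ s) (d : Set X → ℝ≥0) (hd : IsSupergale N s d) (k : ℕ)
    (M : ℝ≥0∞) (hM : M = ∑' W : N.B 0, (d W : ℝ≥0∞) * EMetric.diam (W : Set X) ^ s)
    (C D : Set (Set X))
    (hC : C = {U : Set X | N.MemB U ∧ 0 < EMetric.diam U ∧ 2 ^ k * M < (d U : ℝ≥0∞)})
    (hD : D = {U ∈ C | ∀ V ∈ C, U ⊆ V → U = V}) :
    (∑' U : D, EMetric.diam (U : Set X) ^ s) ≤ 2 ^ (-(k : ℤ)) := by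
  classical
  have hMfin : M ≠ ∞ := by rw [hM]; exact hd.1.ne
  -- properties of elements of D
  have hDC : ∀ U ∈ D, U ∈ C := fun U hU => (hD ▸ hU).1
  have hCd : ∀ U ∈ C, N.MemB U ∧ 0 < EMetric.diam U ∧ 2 ^ k * M < (d U : ℝ≥0∞) := by
    intro U hU; rw [hC] at hU; exact hU
  -- reduce to finite sums
  rw [ENNReal.tsum_eq_iSup_sum]
  refine iSup_le fun F => ?_
  set G : Finset (Set X) := F.image (Subtype.val) with hGdef
  have hsum_eq : ∑ U ∈ F, EMetric.diam (U : Set X) ^ s = ∑ A ∈ G, EMetric.diam A ^ s := by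
    rw [hGdef, Finset.sum_image (fun x _ y _ h => Subtype.val_injective h)]
  rw [hsum_eq]
  have hGD : ∀ A ∈ G, A ∈ D := by
    intro A hA
    obtain ⟨⟨A, hAD⟩, _, rfl⟩ := Finset.mem_image.mp hA
    exact hAD
  -- a level function
  set ℓ : Set X → ℕ := fun U => if h : N.MemB U then h.choose else 0 with hℓ
  have hmem : ∀ A ∈ G, A ∈ N.B (ℓ A) := by
    intro A hA
    have h : N.MemB A := (hCd A (hDC A (hGD A hA))).1
    have : ℓ A = h.choose := by simp [hℓ, h]
    rw [this]
    exact h.choose_spec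
  have hinv : ∀ U ∈ G, ∀ V ∈ G, ℓ U < ℓ V → ¬ V ⊆ U := by
    intro U hU V hV hlt hVU
    have hUC : U ∈ C := hDC U (hGD U hU)
    have hVD := hD ▸ hGD V hV
    have : V = U := hVD.2 U hUC hVU
    rw [this] at hlt
    omega
  have hkey := antichain_sum_le N hd (G.sup ℓ) ℓ G hmem (fun U hU => Finset.le_sup hU) hinv
  rw [← hM] at hkey
  by_cases hM0 : M = 0
  · -- then G is empty
    have hGempty : G = ∅ := by
      by_contra hne
      obtain ⟨A, hA⟩ := Finset.nonempty_of_ne_empty hne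
      have hAC := hCd A (hDC A (hGD A hA))
      have hfA : (d A : ℝ≥0∞) * EMetric.diam A ^ s ≤ 0 := by
        calc (d A : ℝ≥0∞) * EMetric.diam A ^ s
            ≤ ∑ U ∈ G, (d U : ℝ≥0∞) * EMetric.diam U ^ s :=
              Finset.single_le_sum (f := fun U => (d U : ℝ≥0∞) * EMetric.diam U ^ s)
                (fun _ _ => zero_le) hA
          _ ≤ M := hkey
          _ = 0 := hM0
      have hd0 : (d A : ℝ≥0∞) ≠ 0 := by
        have := hAC.2.2
        rw [hM0, mul_zero] at this
        exact (this).ne'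
      have hdiam0 : EMetric.diam A ^ s ≠ 0 := by
        intro h
        rw [ENNReal.rpow_eq_zero_iff] at h
        rcases h with ⟨h1, _⟩ | ⟨_, h2⟩
        · exact absurd h1 hAC.2.1.ne'
        · linarith
      exact absurd (le_antisymm hfA zero_le) (mul_ne_zero hd0 hdiam0)
    rw [hGempty, Finset.sum_empty]
    exact zero_le
  · -- M ≠ 0, M ≠ ∞
    have h2M0 : (2 : ℝ≥0∞) ^ k * M ≠ 0 := by
      apply mul_ne_zero (by positivity) hM0
    have h2Mtop : (2 : ℝ≥0∞) ^ k * M ≠ ∞ := by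
      apply ENNReal.mul_ne_top (by simp [ENNReal.pow_ne_top]) hMfin
    have hstep : 2 ^ k * M * ∑ A ∈ G, EMetric.diam A ^ s ≤ M := by
      rw [Finset.mul_sum]
      refine le_trans (Finset.sum_le_sum fun A hA => ?_) hkey
      exact mul_le_mul_left (hCd A (hDC A (hGD A hA))).2.2.le _
    have : ∑ A ∈ G, EMetric.diam A ^ s ≤ (2 ^ k * M)⁻¹ * M := by
      calc ∑ A ∈ G, EMetric.diam A ^ s
          = (2 ^ k * M)⁻¹ * (2 ^ k * M * ∑ A ∈ G, EMetric.diam A ^ s) := by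
            rw [← mul_assoc, ENNReal.inv_mul_cancel h2M0 h2Mtop, one_mul]
        _ ≤ (2 ^ k * M)⁻¹ * M := mul_le_mul_right hstep _
    refine this.trans_eq ?_
    rw [ENNReal.mul_inv (Or.inl (by positivity)) (Or.inl (by simp [ENNReal.pow_ne_top])),
      mul_assoc, ENNReal.inv_mul_cancel hM0 hMfin, mul_one,
      ENNReal.zpow_neg, zpow_natCast]
end

section
/- If d is an s-supergale and A ⊆ S^∞[d], then dim_H(A) ≤ s. In other words, dim_H(A) ≤ inf Ĝ(A). -/
open Set Filter
open scoped ENNReal NNReal Topology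

/-- The `δ`-approximate `s`-dimensional Hausdorff premeasure of `A`: the infimum of
`Σ_{U ∈ 𝒞} diam(U)^s` over countable covers `𝒞` of `A` by sets of diameter `< δ`. -/
noncomputable def Hδ {X : Type*} [MetricSpace X] (s : ℝ) (δ : ℝ≥0∞) (A : Set X) : ℝ≥0∞ :=
  ⨅ (𝒞 : Set (Set X)) (_ : 𝒞.Countable) (_ : A ⊆ ⋃₀ 𝒞)
    (_ : ∀ U ∈ 𝒞, EMetric.diam U < δ),
    ∑' U : 𝒞, EMetric.diam (U : Set X) ^ s

/-- The `s`-dimensional Hausdorff measure `H^s(A) = lim_{δ→0} H_δ^s(A)`;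
since `H_δ^s(A)` is monotone as `δ → 0`, the limit equals the supremum over `δ > 0`. -/
noncomputable def Hmeas {X : Type*} [MetricSpace X] (s : ℝ) (A : Set X) : ℝ≥0∞ :=
  ⨆ (δ : ℝ≥0∞) (_ : 0 < δ), Hδ s δ A

/-- The Hausdorff dimension of `A`: the infimum of the set of `s ∈ [0,∞)` with
`H^s(A) = 0` (as an extended nonnegative real, `∞` when no such `s` exists). -/
noncomputable def hdim {X : Type*} [MetricSpace X] (A : Set X) : ℝ≥0∞ :=
  sInf (ENNReal.ofReal '' {s : ℝ | 0 ≤ s ∧ Hmeas s A = 0})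

section SupergaleAux

variable {X : Type*} [MetricSpace X] {c : ℕ}

/-- The mass `d(U)·diam(U)^s` of a set. -/
noncomputable def sgMass (s : ℝ) (d : Set X → ℝ≥0) (U : Set X) : ℝ≥0∞ :=
  (d U : ℝ≥0∞) * EMetric.diam U ^ s

/-- `U` is a "first-hit" set at level `n` for predicate `P`. -/
def sgGood (N : NiceCover X c) (P : Set X → Prop) (n : ℕ) (U : Set X) : Prop :=
  U ∈ N.B n ∧ P U ∧ ∀ m < n, ∀ V ∈ N.B m, U ⊆ V → ¬ P V

/-- The collection of first-hit sets. -/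
def sgC (N : NiceCover X c) (P : Set X → Prop) : Set (Set X) :=
  {U | ∃ n, sgGood N P n U}

lemma sg_sum_le_tsum {S : Set (Set X)} (f : Set X → ℝ≥0∞) (F : Finset (Set X))
    (h : ∀ U ∈ F, U ∈ S) : (∑ U ∈ F, f U) ≤ ∑' U : S, f U := by
  calc ∑ U ∈ F, f U = ∑ U ∈ F, S.indicator f U :=
        Finset.sum_congr rfl fun U hU => (Set.indicator_of_mem (h U hU) f).symm
    _ ≤ ∑' U, S.indicator f U := ENNReal.sum_le_tsum F
    _ = ∑' U : S, f U := (tsum_subtype S f).symm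

variable {N : NiceCover X c} {s : ℝ} {d : Set X → ℝ≥0}

lemma sg_child_le (hd : IsSupergale N s d) {n : ℕ} {U V : Set X}
    (hV : V ∈ N.B n) (hU : U ∈ N.B (n + 1)) (hUV : U ⊆ V) :
    sgMass s d U ≤ sgMass s d V := by
  have h1 : sgMass s d U ≤
      ∑' V' : {V' // V' ∈ N.B (n + 1) ∧ V' ⊆ V}, sgMass s d (V' : Set X) :=
    ENNReal.le_tsum (⟨U, hU, hUV⟩ : {V' // V' ∈ N.B (n + 1) ∧ V' ⊆ V})
  exact h1.trans (hd.2 n V hV)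

lemma sg_mass_le_W (hd : IsSupergale N s d) :
    ∀ n, ∀ U ∈ N.B n, sgMass s d U ≤ ∑' V : N.B 0, sgMass s d (V : Set X) := by
  intro n
  induction n with
  | zero => exact fun U hU => ENNReal.le_tsum (⟨U, hU⟩ : N.B 0)
  | succ n ih =>
    intro U hU
    obtain ⟨V, ⟨hV, hUV⟩, -⟩ := N.unique_ancestor (n + 1) U hU n (Nat.lt_succ_self n)
    exact (sg_child_le hd hV hU hUV).trans (ih V hV)

lemma sg_kraft_aux (hd : IsSupergale N s d) (P : Set X → Prop) :
    ∀ t j (V : Set X), V ∈ N.B j → ∀ F : Finset (Set X),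
      (∀ U ∈ F, ∃ n, sgGood N P n U ∧ j ≤ n ∧ n ≤ j + t ∧ U ⊆ V ∧ (n = j → U = V)) →
      ∑ U ∈ F, sgMass s d U ≤ sgMass s d V := by
  classical
  intro t
  induction t with
  | zero =>
    intro j V hV F hF
    have hsub : F ⊆ {V} := by
      intro U hU
      obtain ⟨n, -, hjn, hnt, -, he⟩ := hF U hU
      simp [he (by omega)]
    calc ∑ U ∈ F, sgMass s d U ≤ ∑ U ∈ ({V} : Finset (Set X)), sgMass s d U :=
          Finset.sum_le_sum_of_subset hsub
      _ = sgMass s d V := Finset.sum_singleton _ _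
  | succ t ih =>
    intro j V hV F hF
    by_cases hVF : V ∈ F
    · obtain ⟨nV, ⟨hVB, hPV, -⟩, -⟩ := hF V hVF
      have hsub : F ⊆ {V} := by
        intro U hU
        obtain ⟨n, ⟨hUB, hPU, hmin⟩, hjn, hnt, hUV, he⟩ := hF U hU
        rcases eq_or_lt_of_le hjn with h | h
        · simp [he h.symm]
        · exact absurd hPV (hmin j h V hV hUV)
      calc ∑ U ∈ F, sgMass s d U ≤ ∑ U ∈ ({V} : Finset (Set X)), sgMass s d U :=
            Finset.sum_le_sum_of_subset hsub
        _ = sgMass s d V := Finset.sum_singleton _ _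
    · set g : Set X → Set X := fun U =>
        if U ∈ N.B (j + 1) then U
        else if h : ∃ W, W ∈ N.B (j + 1) ∧ U ⊆ W ∧ W ⊆ V then h.choose else U with hgdef
      have hg : ∀ U ∈ F, g U ∈ N.B (j + 1) ∧ g U ⊆ V ∧
          ∃ n, sgGood N P n U ∧ j + 1 ≤ n ∧ n ≤ (j + 1) + t ∧ U ⊆ g U ∧
            (n = j + 1 → U = g U) := by
        intro U hU
        obtain ⟨n, hgood, hjn, hnt, hUV, he⟩ := hF U hU
        have hUB := hgood.1
        have hUneV : U ≠ V := fun h => hVF (h ▸ hU)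
        have hjn' : j < n := lt_of_le_of_ne hjn (fun h => hUneV (he h.symm))
        by_cases hU1 : U ∈ N.B (j + 1)
        · have hgU : g U = U := by simp [hgdef, hU1]
          rw [hgU]
          exact ⟨hU1, hUV, n, hgood, hjn', by omega, subset_rfl, fun _ => rfl⟩
        · have hn1 : j + 1 < n := by
            rcases Nat.lt_or_ge (j + 1) n with h | h
            · exact h
            · have hnj : n = j + 1 := by omega
              exact absurd (hnj ▸ hUB) hU1
          have hex : ∃ W, W ∈ N.B (j + 1) ∧ U ⊆ W ∧ W ⊆ V := by
            obtain ⟨W, ⟨hWB, hUW⟩, -⟩ := N.unique_ancestor n U hUB (j + 1) hn1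
            obtain ⟨Z, ⟨hZB, hWZ⟩, -⟩ := N.unique_ancestor (j + 1) W hWB j (Nat.lt_succ_self j)
            have hZV : Z = V := by
              obtain ⟨V', -, huniq⟩ := N.unique_ancestor n U hUB j hjn'
              exact (huniq Z ⟨hZB, hUW.trans hWZ⟩).trans (huniq V ⟨hV, hUV⟩).symm
            exact ⟨W, hWB, hUW, hZV ▸ hWZ⟩
          have hgU : g U = hex.choose := by
            rw [hgdef]
            simp only [if_neg hU1, dif_pos hex]
          obtain ⟨hWB, hUW, hWV⟩ := hex.choose_spec
          rw [hgU]
          exact ⟨hWB, hWV, n, hgood, by omega, by omega, hUW, fun h => absurd h (by omega)⟩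
      have hmaps : ∀ U ∈ F, g U ∈ F.image g := fun U hU => Finset.mem_image_of_mem g hU
      calc ∑ U ∈ F, sgMass s d U
          = ∑ W ∈ F.image g, ∑ U ∈ F.filter (fun U => g U = W), sgMass s d U :=
            (Finset.sum_fiberwise_of_maps_to hmaps _).symm
        _ ≤ ∑ W ∈ F.image g, sgMass s d W := by
            refine Finset.sum_le_sum fun W hW => ?_
            obtain ⟨U₀, hU₀, rfl⟩ := Finset.mem_image.mp hW
            refine ih (j + 1) (g U₀) (hg U₀ hU₀).1 _ ?_
            intro U hU
            rw [Finset.mem_filter] at hU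
            obtain ⟨hUF, hgu⟩ := hU
            obtain ⟨-, -, n, hgood, h1, h2, h3, h4⟩ := hg U hUF
            exact ⟨n, hgood, h1, h2, hgu ▸ h3, fun h => hgu ▸ h4 h⟩
        _ ≤ ∑' W : {W // W ∈ N.B (j + 1) ∧ W ⊆ V}, sgMass s d (W : Set X) := by
            refine sg_sum_le_tsum (S := {W | W ∈ N.B (j + 1) ∧ W ⊆ V}) _ _ fun W hW => ?_
            obtain ⟨U₀, hU₀, rfl⟩ := Finset.mem_image.mp hW
            exact ⟨(hg U₀ hU₀).1, (hg U₀ hU₀).2.1⟩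
        _ ≤ sgMass s d V := hd.2 j V hV

lemma sg_kraft (hd : IsSupergale N s d) (P : Set X → Prop)
    (F : Finset (Set X)) (hF : ∀ U ∈ F, U ∈ sgC N P) :
    ∑ U ∈ F, sgMass s d U ≤ ∑' V : N.B 0, sgMass s d (V : Set X) := by
  classical
  have hF' : ∀ U ∈ F, ∃ n, sgGood N P n U := hF
  choose! nf hnf using hF'
  set t := F.sup nf with ht
  set g : Set X → Set X := fun U =>
    if U ∈ N.B 0 then U
    else if h : ∃ W, W ∈ N.B 0 ∧ U ⊆ W then h.choose else U with hgdef
  have hg : ∀ U ∈ F, g U ∈ N.B 0 ∧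
      ∃ n, sgGood N P n U ∧ 0 ≤ n ∧ n ≤ 0 + t ∧ U ⊆ g U ∧ (n = 0 → U = g U) := by
    intro U hU
    have hgood := hnf U hU
    have hUB := hgood.1
    have hnt : nf U ≤ t := Finset.le_sup hU
    by_cases hU0 : U ∈ N.B 0
    · have hgU : g U = U := by simp [hgdef, hU0]
      rw [hgU]
      exact ⟨hU0, nf U, hgood, Nat.zero_le _, by omega, subset_rfl, fun _ => rfl⟩
    · have h0 : 0 < nf U := Nat.pos_of_ne_zero (fun h => hU0 (h ▸ hUB))
      have hex : ∃ W, W ∈ N.B 0 ∧ U ⊆ W := by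
        obtain ⟨W, ⟨hWB, hUW⟩, -⟩ := N.unique_ancestor (nf U) U hUB 0 h0
        exact ⟨W, hWB, hUW⟩
      have hgU : g U = hex.choose := by
        rw [hgdef]
        simp only [if_neg hU0, dif_pos hex]
      obtain ⟨hWB, hUW⟩ := hex.choose_spec
      rw [hgU]
      exact ⟨hWB, nf U, hgood, Nat.zero_le _, by omega, hUW, fun h => absurd h (by omega)⟩
  have hmaps : ∀ U ∈ F, g U ∈ F.image g := fun U hU => Finset.mem_image_of_mem g hU
  calc ∑ U ∈ F, sgMass s d U
      = ∑ W ∈ F.image g, ∑ U ∈ F.filter (fun U => g U = W), sgMass s d U :=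
        (Finset.sum_fiberwise_of_maps_to hmaps _).symm
    _ ≤ ∑ W ∈ F.image g, sgMass s d W := by
        refine Finset.sum_le_sum fun W hW => ?_
        obtain ⟨U₀, hU₀, rfl⟩ := Finset.mem_image.mp hW
        refine sg_kraft_aux hd P t 0 (g U₀) (hg U₀ hU₀).1 _ ?_
        intro U hU
        rw [Finset.mem_filter] at hU
        obtain ⟨hUF, hgu⟩ := hU
        obtain ⟨-, n, hgood, h1, h2, h3, h4⟩ := hg U hUF
        exact ⟨n, hgood, h1, h2, hgu ▸ h3, fun h => hgu ▸ h4 h⟩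
    _ ≤ ∑' V : N.B 0, sgMass s d (V : Set X) := by
        refine sg_sum_le_tsum (S := N.B 0) _ _ fun W hW => ?_
        obtain ⟨U₀, hU₀, rfl⟩ := Finset.mem_image.mp hW
        exact (hg U₀ hU₀).1

lemma sg_tsum_C_le (hd : IsSupergale N s d) (P : Set X → Prop) :
    ∑' U : sgC N P, sgMass s d (U : Set X) ≤ ∑' V : N.B 0, sgMass s d (V : Set X) := by
  classical
  rw [ENNReal.tsum_eq_iSup_sum]
  refine iSup_le fun F => ?_
  have : ∑ i ∈ F, sgMass s d (i : Set X) = ∑ U ∈ F.image Subtype.val, sgMass s d U := by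
    rw [Finset.sum_image (fun x _ y _ h => Subtype.ext h)]
  rw [this]
  refine sg_kraft hd P _ fun U hU => ?_
  obtain ⟨i, -, rfl⟩ := Finset.mem_image.mp hU
  exact i.2

lemma sg_countable (hd : IsSupergale N s d) (P : Set X → Prop)
    (hP : ∀ U, P U → sgMass s d U ≠ 0) : (sgC N P).Countable := by
  have hPos : ∀ n, {U | U ∈ N.B n ∧ sgMass s d U ≠ 0}.Countable := by
    intro n
    induction n with
    | zero =>
      have hcnt : (Function.support (fun V : N.B 0 => sgMass s d (V : Set X))).Countable :=
        Summable.countable_support_ennreal hd.1.ne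
      have : {U | U ∈ N.B 0 ∧ sgMass s d U ≠ 0} ⊆
          Subtype.val '' (Function.support (fun V : N.B 0 => sgMass s d (V : Set X))) := by
        rintro U ⟨hU, hm⟩
        exact ⟨⟨U, hU⟩, hm, rfl⟩
      exact (hcnt.image _).mono this
    | succ n ih =>
      have hsub : {U | U ∈ N.B (n + 1) ∧ sgMass s d U ≠ 0} ⊆
          ⋃ V ∈ {U | U ∈ N.B n ∧ sgMass s d U ≠ 0}, {U | U ∈ N.B (n + 1) ∧ U ⊆ V} := by
        rintro U ⟨hU, hm⟩
        obtain ⟨V, ⟨hV, hUV⟩, -⟩ := N.unique_ancestor (n + 1) U hU n (Nat.lt_succ_self n)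
        have hmV : sgMass s d V ≠ 0 := fun h0 => hm <| le_antisymm
          (h0 ▸ sg_child_le hd hV hU hUV) zero_le
        exact Set.mem_biUnion ⟨hV, hmV⟩ ⟨hU, hUV⟩
      refine Set.Countable.mono hsub ?_
      exact Set.Countable.biUnion ih fun V hV => ((N.finite_children n V hV.1).subset
        (fun U hU => hU)).countable
  have hsubC : sgC N P ⊆ ⋃ n, {U | U ∈ N.B n ∧ sgMass s d U ≠ 0} := by
    rintro U ⟨n, hUB, hPU, -⟩
    exact Set.mem_iUnion.mpr ⟨n, hUB, hP U hPU⟩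
  exact Set.Countable.mono hsubC (Set.countable_iUnion hPos)

lemma sg_cover (hd : IsSupergale N s d) {K : ℝ≥0∞} (hK : K ≠ ⊤)
    {x : X} (hx : Succeeds N d x) :
    ∃ U ∈ sgC N (fun U => K ≤ (d U : ℝ≥0∞) ∧ 0 < EMetric.diam U), x ∈ U := by
  obtain ⟨w, hwB, hwx, hlim⟩ := hx
  set C : ℝ≥0∞ := max K ((d {x} : ℝ≥0) : ℝ≥0∞) with hC
  have hCt : C ≠ ⊤ := by
    rw [hC]
    simp [hK]
  have hn₁ : ∃ n, C < (d (w n) : ℝ≥0∞) := by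
    by_contra h
    push_neg at h
    have hle : Filter.atTop.limsup (fun n => (d (w n) : ℝ≥0∞)) ≤ C :=
      limsup_le_of_le (by isBoundedDefault) (Filter.Eventually.of_forall h)
    rw [hlim] at hle
    exact hCt (top_le_iff.mp hle)
  obtain ⟨n₁, hn₁⟩ := hn₁
  set P : Set X → Prop := fun U => K ≤ (d U : ℝ≥0∞) ∧ 0 < EMetric.diam U with hP
  have hPwn : P (w n₁) := by
    constructor
    · exact (le_max_left _ _).trans hn₁.le
    · have hne : w n₁ ≠ {x} := by
        intro h
        rw [h] at hn₁
        exact absurd hn₁ (not_lt.mpr (le_max_right _ _))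
      obtain ⟨y, hy, hyx⟩ : ∃ y ∈ w n₁, y ≠ x := by
        by_contra h
        push_neg at h
        exact hne (Set.eq_singleton_iff_unique_mem.mpr ⟨hwx n₁, h⟩)
      calc (0 : ℝ≥0∞) < edist y x := by simpa [edist_pos] using hyx
        _ ≤ EMetric.diam (w n₁) := EMetric.edist_le_diam_of_mem hy (hwx n₁)
  have hSne : ({m | ∃ V, V ∈ N.B m ∧ w n₁ ⊆ V ∧ P V} : Set ℕ).Nonempty :=
    ⟨n₁, w n₁, hwB n₁, subset_rfl, hPwn⟩
  obtain ⟨V₀, hV₀B, hV₀sub, hV₀P⟩ := Nat.sInf_mem hSne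
  refine ⟨V₀, ⟨sInf {m | ∃ V, V ∈ N.B m ∧ w n₁ ⊆ V ∧ P V}, hV₀B, hV₀P, ?_⟩, hV₀sub (hwx n₁)⟩
  intro m hm V hVB hsub hPV
  exact Nat.notMem_of_lt_sInf hm ⟨V, hVB, hV₀sub.trans hsub, hPV⟩

end SupergaleAux

lemma Hδ_empty {X : Type*} [MetricSpace X] (s : ℝ) (δ : ℝ≥0∞) :
    Hδ s δ (∅ : Set X) = 0 := by
  refine le_antisymm ?_ zero_le
  refine iInf_le_of_le ∅ (iInf_le_of_le Set.countable_empty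
    (iInf_le_of_le (by simp) (iInf_le_of_le (by simp) ?_)))
  exact le_of_eq tsum_empty

/-- If `d` is an `s`-supergale on a nice cover of `X` and `A ⊆ S^∞[d]`, then
`dim_H(A) ≤ s`; in other words `dim_H(A) ≤ inf Ĝ(A)`. -/
theorem hdim_le_of_supergale {X : Type*} [MetricSpace X] {c : ℕ} (N : NiceCover X c)
    (s : ℝ) (hs : 0 ≤ s) (d : Set X → ℝ≥0) (hd : IsSupergale N s d)
    (A : Set X) (hA : A ⊆ SuccessSet N d) :
    hdim A ≤ ENNReal.ofReal s := by
  set W : ℝ≥0∞ := ∑' V : N.B 0, sgMass s d (V : Set X) with hW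
  have hWne : W ≠ ⊤ := hd.1.ne
  have hH : Hmeas s A = 0 := by
    rcases eq_or_lt_of_le hs with hs0 | hs0
    · -- s = 0 : the success set is empty
      have hAempty : A = ∅ := by
        rw [Set.eq_empty_iff_forall_notMem]
        intro x hx
        obtain ⟨w, hwB, hwx, hlim⟩ := hA hx
        have hb : ∀ n, (d (w n) : ℝ≥0∞) ≤ W := by
          intro n
          have h1 : sgMass s d (w n) ≤ W := sg_mass_le_W hd n (w n) (hwB n)
          have h2 : sgMass s d (w n) = (d (w n) : ℝ≥0∞) := by
            rw [sgMass, ← hs0, ENNReal.rpow_zero, mul_one]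
          rwa [h2] at h1
        have hle : Filter.atTop.limsup (fun n => (d (w n) : ℝ≥0∞)) ≤ W :=
          limsup_le_of_le (by isBoundedDefault) (Filter.Eventually.of_forall hb)
        rw [hlim] at hle
        exact hWne (top_le_iff.mp hle)
      rw [hAempty, Hmeas]
      refine le_antisymm (iSup₂_le fun δ hδ => ?_) zero_le
      exact (Hδ_empty s δ).le
    · -- 0 < s
      rw [Hmeas]
      refine le_antisymm (iSup₂_le fun δ hδ => ?_) zero_le
      -- show Hδ s δ A = 0, i.e. ≤ 0
      refine ENNReal.le_of_forall_pos_le_add fun ε hε _ => ?_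
      rw [zero_add]
      -- choose k
      have hδs : (0 : ℝ≥0∞) < δ ^ s := ENNReal.rpow_pos_of_nonneg hδ hs
      set θ : ℝ≥0∞ := min (δ ^ s) (ε : ℝ≥0∞) with hθ
      have hθ0 : θ ≠ 0 := by
        have : (0 : ℝ≥0∞) < θ := lt_min hδs (by exact_mod_cast hε)
        exact this.ne'
      have hθt : θ ≠ ⊤ := by
        refine ne_top_of_le_ne_top ?_ (min_le_right _ _)
        exact ENNReal.coe_ne_top
      obtain ⟨k, hk⟩ := ENNReal.exists_nat_gt (ENNReal.div_lt_top hWne hθ0).ne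
      have hk0 : (k : ℝ≥0∞) ≠ 0 := (zero_le.trans_lt hk).ne'
      have hkt : (k : ℝ≥0∞) ≠ ⊤ := ENNReal.natCast_ne_top k
      have hWk : W / (k : ℝ≥0∞) < θ := by
        rw [ENNReal.div_lt_iff (Or.inl hk0) (Or.inl hkt)]
        rw [ENNReal.div_lt_iff (Or.inl hθ0) (Or.inl hθt)] at hk
        rwa [mul_comm] at hk
      set P : Set X → Prop := fun U => (k : ℝ≥0∞) ≤ (d U : ℝ≥0∞) ∧ 0 < EMetric.diam U
        with hPdef
      set 𝒞 : Set (Set X) := sgC N P with h𝒞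
      have hPd : ∀ U ∈ 𝒞, (k : ℝ≥0∞) ≤ (d U : ℝ≥0∞) ∧ 0 < EMetric.diam U := by
        rintro U ⟨n, hUB, hPU, -⟩
        exact hPU
      have hmassW : ∀ U ∈ 𝒞, sgMass s d U ≤ W := by
        rintro U ⟨n, hUB, -⟩
        exact sg_mass_le_W hd n U hUB
      have hdiam : ∀ U ∈ 𝒞, EMetric.diam U ^ s ≤ W / (k : ℝ≥0∞) := by
        intro U hU
        rw [ENNReal.le_div_iff_mul_le (Or.inl hk0) (Or.inl hkt)]
        calc EMetric.diam U ^ s * (k : ℝ≥0∞) = (k : ℝ≥0∞) * EMetric.diam U ^ s := mul_comm _ _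
          _ ≤ (d U : ℝ≥0∞) * EMetric.diam U ^ s := mul_le_mul_left (hPd U hU).1 _
          _ ≤ W := hmassW U hU
      have hdiamlt : ∀ U ∈ 𝒞, EMetric.diam U < δ := by
        intro U hU
        by_contra h
        push_neg at h
        have h1 : δ ^ s ≤ EMetric.diam U ^ s := ENNReal.rpow_le_rpow h hs
        have h2 : EMetric.diam U ^ s < δ ^ s :=
          lt_of_le_of_lt (hdiam U hU) (hWk.trans_le (min_le_left _ _))
        exact absurd h1 (not_le.mpr h2)
      have hcov : A ⊆ ⋃₀ 𝒞 := by
        intro x hx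
        obtain ⟨U, hU, hxU⟩ := sg_cover hd hkt (hA hx)
        exact ⟨U, hU, hxU⟩
      have hcnt : 𝒞.Countable := by
        refine sg_countable hd P fun U hPU => ?_
        refine mul_ne_zero ?_ ?_
        · exact (lt_of_lt_of_le (ENNReal.coe_lt_coe.mpr
            (show (0 : ℝ≥0) < (k : ℝ≥0) from by
              exact_mod_cast Nat.pos_of_ne_zero (by exact_mod_cast fun h => hk0 (by simp [h]))))
            (by exact_mod_cast hPU.1)).ne'
        · rw [Ne, ENNReal.rpow_eq_zero_iff]
          push_neg
          exact ⟨fun h => absurd h hPU.2.ne', fun _ => hs0.le⟩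
      have hsum : (∑' U : 𝒞, EMetric.diam (U : Set X) ^ s) ≤ W / (k : ℝ≥0∞) := by
        calc ∑' U : 𝒞, EMetric.diam (U : Set X) ^ s
            ≤ ∑' U : 𝒞, sgMass s d (U : Set X) / (k : ℝ≥0∞) := by
              refine ENNReal.tsum_le_tsum fun U => ?_
              rw [ENNReal.le_div_iff_mul_le (Or.inl hk0) (Or.inl hkt)]
              calc EMetric.diam (U : Set X) ^ s * (k : ℝ≥0∞)
                  = (k : ℝ≥0∞) * EMetric.diam (U : Set X) ^ s := mul_comm _ _
                _ ≤ (d (U : Set X) : ℝ≥0∞) * EMetric.diam (U : Set X) ^ s :=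
                    mul_le_mul_left (hPd U U.2).1 _
                _ = sgMass s d (U : Set X) := rfl
          _ = (∑' U : 𝒞, sgMass s d (U : Set X)) / (k : ℝ≥0∞) := by
              simp only [div_eq_mul_inv, ENNReal.tsum_mul_right]
          _ ≤ W / (k : ℝ≥0∞) := ENNReal.div_le_div_right (sg_tsum_C_le hd P) _
      have hHδ : Hδ s δ A ≤ ∑' U : 𝒞, EMetric.diam (U : Set X) ^ s :=
        iInf_le_of_le 𝒞 (iInf_le_of_le hcnt (iInf_le_of_le hcov
          (iInf_le_of_le hdiamlt (le_refl _))))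
      calc Hδ s δ A ≤ ∑' U : 𝒞, EMetric.diam (U : Set X) ^ s := hHδ
        _ ≤ W / (k : ℝ≥0∞) := hsum
        _ ≤ θ := hWk.le
        _ ≤ (ε : ℝ≥0∞) := min_le_right _ _
  exact sInf_le ⟨s, ⟨hs, hH⟩, rfl⟩
end
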